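/- Let X be a Haar system space in which the Rademacher sequence (r_n) is not equivalent to the unit vector basis of ℓ_1. Then (r_n) is weakly null in X. -/

import Mathlib

open MeasureTheory Filter Set
open scoped ENNReal

noncomputable section
open Classical

/-- The dyadic interval of level `n` and position `i`. -/
def dyI (n i : ℕ) : Set ℝ := Set.Ico ((i : ℝ) / 2 ^ n) ((i + 1 : ℝ) / 2 ^ n)

/-- The Haar function of the dyadic interval of level `n`, position `i`. -/
def haarFn (n i : ℕ) : ℝ → ℝ := fun x =>
  if x ∈ dyI (n + 1) (2 * i) then 1 else if x ∈ dyI (n + 1) (2 * i + 1) then -1 else 0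

/-- Indexing of `D⁺`: `none` is the "empty" index `∅`, `some (n, i)` a dyadic interval. -/
def haarP : Option (ℕ × ℕ) → ℝ → ℝ
  | none => (Set.Ico (0 : ℝ) 1).indicator 1
  | some (n, i) => haarFn n i

/-- The interval supporting a given index of `D⁺` (with the convention that `∅` is
supported on `[0,1)`). -/
def suppI : Option (ℕ × ℕ) → Set ℝ
  | none => Set.Ico (0 : ℝ) 1
  | some p => dyI p.1 p.2

def lenI : Option (ℕ × ℕ) → ℝ
  | none => 1
  | some (n, _i) => 1 / 2 ^ n

def validIdx : Option (ℕ × ℕ) → Prop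
  | none => True
  | some (n, i) => i < 2 ^ n

/-- The position of the `k`-th member of a branch determined by signs `θ`
(`θ k = true` means the branch turns to the left half at step `k`). -/
def branchPos (θ : ℕ → Bool) : ℕ → ℕ
  | 0 => 0
  | 1 => 0
  | k + 2 => 2 * branchPos θ (k + 1) + (if θ (k + 1) then 0 else 1)

/-- The `k`-th member `I_k` of the branch determined by `θ`, as an index in `D⁺`. -/
def branchI (θ : ℕ → Bool) (k : ℕ) : Option (ℕ × ℕ) :=
  if k = 0 then none else some (k - 1, branchPos θ k)

/-- The sign `θ_k`, with the convention `θ_0 = 1`. -/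
def branchSgn (θ : ℕ → Bool) (k : ℕ) : ℝ :=
  if k = 0 then 1 else if θ k then 1 else -1

/-- The weight `|I_k|⁻¹`, with the convention `|I_0|⁻¹ = |∅|⁻¹ = 1`. -/
def branchWt (k : ℕ) : ℝ := if k = 0 then 1 else 2 ^ (k - 1)

/-- `B_k = I_k \ I_{k+1}`. -/
def branchB (θ : ℕ → Bool) (k : ℕ) : Set ℝ := suppI (branchI θ k) \ suppI (branchI θ (k + 1))


/-- Lebesgue measure restricted to `[0,1)`. -/
def mu01 : Measure ℝ := volume.restrict (Set.Ico 0 1)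

lemma mu01_ne_top (s : Set ℝ) : mu01 s ≠ ⊤ := by
  refine ne_top_of_le_ne_top ?_ (measure_mono (Set.subset_univ s))
  have : mu01 Set.univ = volume (Set.Ico (0:ℝ) 1) := by
    simp [mu01]
  rw [this, Real.volume_Ico]
  exact ENNReal.ofReal_ne_top

/-- indicator of a measurable set, as an element of `L₁[0,1)`. -/
def indL1 (s : Set ℝ) (hs : MeasurableSet s) : Lp ℝ 1 mu01 :=
  indicatorConstLp 1 hs (mu01_ne_top s) (1 : ℝ)

/-- The Haar system as elements of `L₁[0,1)`, indexed by `D⁺`. -/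
def haarL1 : Option (ℕ × ℕ) → Lp ℝ 1 mu01
  | none => indL1 (Set.Ico (0 : ℝ) 1) measurableSet_Ico
  | some (n, i) => indL1 (dyI (n + 1) (2 * i)) measurableSet_Ico
      - indL1 (dyI (n + 1) (2 * i + 1)) measurableSet_Ico

section Tensor

variable {X : Type*} [NormedAddCommGroup X] [NormedSpace ℝ X]

/-- the elementary tensor `f ⊗ x` as an element of the Bochner space `L₁([0,1); X)`. -/
def tensorL1 (f : Lp ℝ 1 mu01) (x : X) : Lp X 1 mu01 :=
  ((L1.integrable_coeFn f).smul_const x).toL1 _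

/-- For an operator `T` on `L₁(X)`, a functional `g ∈ X*` and a vector `x ∈ X`, the operator
`T^{(g,x)} : L₁ → L₁` defined by `⟨e*, T^{(g,x)} e⟩ = ⟨e* ⊗ g, T (e ⊗ x)⟩`; concretely
`T^{(g,x)} e = (s ↦ g ((T (e ⊗ x)) s))`. -/
def entryFun (T : Lp X 1 mu01 →L[ℝ] Lp X 1 mu01) (g : X →L[ℝ] ℝ) (x : X)
    (f : Lp ℝ 1 mu01) : Lp ℝ 1 mu01 :=
  (g.integrable_comp (L1.integrable_coeFn (T (tensorL1 f x)))).toL1 _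

end Tensor

/-- the linear span `Z` of the indicators of dyadic intervals. -/
def dyadicSpan : Submodule ℝ (ℝ → ℝ) :=
  Submodule.span ℝ {f | ∃ n i, i < 2 ^ n ∧ f = (dyI n i).indicator 1}

/-- A Haar system space norm: a norm on the span `Z` of the dyadic indicators which is
invariant under equidistribution and gives `χ_{[0,1)}` norm one.  The corresponding Haar
system space is the completion of `Z` under this norm. -/
structure HaarSystemNorm where
  N : (ℝ → ℝ) → ℝ
  nonneg : ∀ f, 0 ≤ N f
  add_le : ∀ f g, f ∈ dyadicSpan → g ∈ dyadicSpan → N (f + g) ≤ N f + N g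
  smul_eq : ∀ (c : ℝ) f, f ∈ dyadicSpan → N (c • f) = |c| * N f
  eq_zero : ∀ f, f ∈ dyadicSpan → N f = 0 → f = 0
  distrib_inv : ∀ f g, f ∈ dyadicSpan → g ∈ dyadicSpan →
    (∀ t : ℝ, volume {x | t < |f x|} = volume {x | t < |g x|}) → N f = N g
  norm_one : N ((Set.Ico (0 : ℝ) 1).indicator 1) = 1

/-- A realization of the Haar system space determined by a Haar system norm:
a Banach space `X` together with a linear embedding `j` of the span of the dyadic
indicators, which is isometric on the span and has dense range. -/
structure HaarSystemSpace (X : Type*) [NormedAddCommGroup X] [NormedSpace ℝ X] where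
  hn : HaarSystemNorm
  j : (ℝ → ℝ) →ₗ[ℝ] X
  norm_j : ∀ f ∈ dyadicSpan, ‖j f‖ = hn.N f
  dense_j : DenseRange (fun f : dyadicSpan => j f)

/-- the `X`-normalized Haar system `μ_L h_L` in a Haar system space. -/
def HaarSystemSpace.e {X : Type*} [NormedAddCommGroup X] [NormedSpace ℝ X]
    (H : HaarSystemSpace X) (L : Option (ℕ × ℕ)) : X :=
  ‖H.j ((suppI L).indicator 1)‖⁻¹ • H.j (haarP L)

section Factors

variable {X : Type*} [NormedAddCommGroup X] [NormedSpace ℝ X]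

/-- `T` is a `C`-factor of `S` with error `ε`. -/
def IsFactor (C ε : ℝ) (T S : X →L[ℝ] X) : Prop :=
  ∃ A B : X →L[ℝ] X, ‖B.comp (T.comp A) - S‖ ≤ ε ∧ ‖A‖ * ‖B‖ ≤ C

/-- `T` is a `C`-projectional factor of `S` with error `ε`: here `A : X → Y ⊆ X` is the
isomorphism onto a complemented subspace and `B = A⁻¹P` where `P` is the projection,
so that `B ∘ A = Id`. -/
def IsProjFactor (C ε : ℝ) (T S : X →L[ℝ] X) : Prop :=
  ∃ A B : X →L[ℝ] X, B.comp A = ContinuousLinearMap.id ℝ X ∧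
    ‖B.comp (T.comp A) - S‖ ≤ ε ∧ ‖A‖ * ‖B‖ ≤ C

end Factors

/-- the `n`-th Rademacher function `r_n = ∑_{L ∈ D_n} h_L`. -/
def rademacherFn (n : ℕ) : ℝ → ℝ := fun x => ∑ i ∈ Finset.range (2 ^ n), haarFn n i x

/-- Enumeration of the Haar system in the usual linear order `ι`
(`haarEnum 1 = h_∅`, `haarEnum 2 = h_{[0,1)}`, then level by level). -/
def haarEnum : ℕ → ℝ → ℝ := fun m =>
  if m ≤ 1 then (Set.Ico (0 : ℝ) 1).indicator 1
  else haarFn (Nat.log 2 (m - 1)) (m - 2 ^ Nat.log 2 (m - 1) - 1)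

/-- extraction of binary digits: `digitsFn x k` records whether the `k`-th digit of `x`
is `0`, i.e. whether the branch through `x` turns left at step `k`. -/
def digitsFn (x : ℝ) : ℕ → Bool := fun k => decide (⌊x * 2 ^ k⌋ % 2 = 0)

/-- the coin-tossing measure on the space of branches `[D⁺] ≃ {-1,1}^ℕ`, realized as the
image of Lebesgue measure on `[0,1)` under the binary-digit identification. -/
def muBr : Measure (ℕ → Bool) := Measure.map digitsFn mu01

/-- `h_Γ^θ = ∑_{J ∈ Γ} θ_J h_J` for a finite collection `Γ` of dyadic intervals. -/
def hGamma (Γ : Finset (ℕ × ℕ)) (θ : ℕ × ℕ → Bool) : ℝ → ℝ :=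
  fun x => ∑ J ∈ Γ, (if θ J then (1:ℝ) else -1) * haarFn J.1 J.2 x

/-- `Γ* = ∪ {I : I ∈ Γ}`. -/
def GammaStar (Γ : Finset (ℕ × ℕ)) : Set ℝ := ⋃ J ∈ Γ, dyI J.1 J.2

/-- `|Γ*|`, the total length of a disjoint finite collection of dyadic intervals. -/
def lenGamma (Γ : Finset (ℕ × ℕ)) : ℝ := ∑ J ∈ Γ, (1 : ℝ) / 2 ^ J.1


/-! ### Auxiliary lemmas for statement14 -/

section Aux14

lemma mem_dyI_iff' {N j : ℕ} {x : ℝ} :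
    x ∈ dyI N j ↔ (j : ℝ) ≤ x * 2 ^ N ∧ x * 2 ^ N < (j : ℝ) + 1 := by
  have h : (0:ℝ) < 2 ^ N := by positivity
  rw [dyI, Set.mem_Ico, div_le_iff₀ h, lt_div_iff₀ h]

lemma dyI_subset_Ico {N j : ℕ} (hj : j < 2 ^ N) : dyI N j ⊆ Set.Ico (0:ℝ) 1 := by
  intro x hx
  rw [mem_dyI_iff'] at hx
  obtain ⟨h1, h2⟩ := hx
  have h : (0:ℝ) < 2 ^ N := by positivity
  have hj' : (j : ℝ) + 1 ≤ 2 ^ N := by exact_mod_cast Nat.succ_le_of_lt hj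
  constructor
  · nlinarith [Nat.cast_nonneg (α := ℝ) j]
  · nlinarith

lemma dyI_disjoint {N i i' : ℕ} (h : i ≠ i') : Disjoint (dyI N i) (dyI N i') := by
  rw [Set.disjoint_left]
  intro x hx hx'
  rw [mem_dyI_iff'] at hx hx'
  have h1 : (i : ℝ) < (i' : ℝ) + 1 := lt_of_le_of_lt hx.1 hx'.2
  have h2 : (i' : ℝ) < (i : ℝ) + 1 := lt_of_le_of_lt hx'.1 hx.2
  have h1' : i < i' + 1 := by exact_mod_cast h1
  have h2' : i' < i + 1 := by exact_mod_cast h2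
  omega

lemma haarFn_eq_sub (n i : ℕ) :
    haarFn n i = (dyI (n+1) (2*i)).indicator 1 - (dyI (n+1) (2*i+1)).indicator 1 := by
  funext x
  by_cases h1 : x ∈ dyI (n+1) (2*i)
  · have h2 : x ∉ dyI (n+1) (2*i+1) :=
      fun h2 => Set.disjoint_left.mp (dyI_disjoint (by omega)) h1 h2
    simp [haarFn, h1, h2]
  · by_cases h2 : x ∈ dyI (n+1) (2*i+1) <;> simp [haarFn, h1, h2]

lemma indicator_dyI_mem {n i : ℕ} (hi : i < 2 ^ n) : (dyI n i).indicator 1 ∈ dyadicSpan :=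
  Submodule.subset_span ⟨n, i, hi, rfl⟩

lemma haarFn_mem {n i : ℕ} (hi : i < 2 ^ n) : haarFn n i ∈ dyadicSpan := by
  have h2 : 2 ^ (n+1) = 2 * 2 ^ n := by rw [pow_succ]; ring
  rw [haarFn_eq_sub]
  exact Submodule.sub_mem _ (indicator_dyI_mem (by omega)) (indicator_dyI_mem (by omega))

lemma rademacherFn_mem (n : ℕ) : rademacherFn n ∈ dyadicSpan := by
  have : rademacherFn n = ∑ i ∈ Finset.range (2 ^ n), haarFn n i := by
    funext x; simp [rademacherFn, Finset.sum_apply]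
  rw [this]
  exact Submodule.sum_mem _ fun i hi => haarFn_mem (Finset.mem_range.mp hi)

lemma haarFn_eq_zero {n i : ℕ} {x : ℝ} (hx : x ∉ Set.Ico (0:ℝ) 1) (hi : i < 2 ^ n) :
    haarFn n i x = 0 := by
  have h2 : 2 ^ (n+1) = 2 * 2 ^ n := by rw [pow_succ]; ring
  have h1 : x ∉ dyI (n+1) (2*i) := fun h => hx (dyI_subset_Ico (by omega) h)
  have h2' : x ∉ dyI (n+1) (2*i+1) := fun h => hx (dyI_subset_Ico (by omega) h)
  simp [haarFn, h1, h2']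

lemma rademacherFn_eq_zero {n : ℕ} {x : ℝ} (hx : x ∉ Set.Ico (0:ℝ) 1) :
    rademacherFn n x = 0 := by
  unfold rademacherFn
  exact Finset.sum_eq_zero fun i hi => haarFn_eq_zero hx (Finset.mem_range.mp hi)

lemma rademacherFn_eq_of_mem_dyI {n m : ℕ} (hm : m < 2 ^ (n+1)) {x : ℝ}
    (hx : x ∈ dyI (n+1) m) :
    rademacherFn n x = if m % 2 = 0 then 1 else -1 := by
  have key : ∀ j : ℕ, x ∈ dyI (n+1) j ↔ j = m := by
    intro j
    rw [mem_dyI_iff'] at hx ⊢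
    constructor
    · rintro ⟨h1, h2⟩
      have k1 : (j : ℝ) < (m : ℝ) + 1 := lt_of_le_of_lt h1 hx.2
      have k2 : (m : ℝ) < (j : ℝ) + 1 := lt_of_le_of_lt hx.1 h2
      have k1' : j < m + 1 := by exact_mod_cast k1
      have k2' : m < j + 1 := by exact_mod_cast k2
      omega
    · rintro rfl; exact hx
  have h2 : 2 ^ (n+1) = 2 * 2 ^ n := by rw [pow_succ]; ring
  unfold rademacherFn haarFn
  rw [Finset.sum_eq_single (m / 2)]
  · simp only [key]
    split_ifs <;> first | rfl | (exfalso; omega)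
  · intro i hi hne
    simp only [key]
    split_ifs <;> first | rfl | (exfalso; omega)
  · intro h
    exfalso; apply h
    rw [Finset.mem_range]
    omega

lemma dyI_step {N n i : ℕ} (hn : n + 1 ≤ N) {x : ℝ} (hx : x ∈ dyI N i) :
    x ∈ dyI (n+1) (i / 2 ^ (N - n - 1)) := by
  set d := N - n - 1 with hd
  have hN : N = (n+1) + d := by omega
  rw [mem_dyI_iff'] at hx ⊢
  obtain ⟨h1, h2⟩ := hx
  rw [hN, pow_add] at h1 h2
  set q := i / 2 ^ d with hq
  have hq1 : q * 2 ^ d ≤ i := Nat.div_mul_le_self i (2 ^ d)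
  have hq2 : i < (q + 1) * 2 ^ d := by
    have h2' := Nat.mod_lt i (show 0 < 2 ^ d by positivity)
    calc i = 2 ^ d * (i / 2 ^ d) + i % 2 ^ d := (Nat.div_add_mod i (2 ^ d)).symm
    _ < 2 ^ d * (i / 2 ^ d) + 2 ^ d := Nat.add_lt_add_left h2' _
    _ = (i / 2 ^ d + 1) * 2 ^ d := by ring
    _ = (q + 1) * 2 ^ d := by rw [hq]
  have hq1' : (q : ℝ) * 2 ^ d ≤ (i : ℝ) := by exact_mod_cast hq1
  have hq2' : (i : ℝ) < ((q : ℝ) + 1) * 2 ^ d := by exact_mod_cast hq2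
  have hpd : (0:ℝ) < 2 ^ d := by positivity
  constructor
  · have key : (q : ℝ) * 2 ^ d ≤ x * 2 ^ (n+1) * 2 ^ d := by
      calc (q : ℝ) * 2 ^ d ≤ (i : ℝ) := hq1'
      _ ≤ x * (2 ^ (n+1) * 2 ^ d) := h1
      _ = x * 2 ^ (n+1) * 2 ^ d := by ring
    exact (mul_le_mul_iff_of_pos_right hpd).mp key
  · have key : x * 2 ^ (n+1) * 2 ^ d < ((q : ℝ) + 1) * 2 ^ d := by
      have hi1 : (i : ℝ) + 1 ≤ ((q : ℝ) + 1) * 2 ^ d := by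
        have : i + 1 ≤ (q + 1) * 2 ^ d := hq2
        exact_mod_cast this
      calc x * 2 ^ (n+1) * 2 ^ d = x * (2 ^ (n+1) * 2 ^ d) := by ring
      _ < (i : ℝ) + 1 := h2
      _ ≤ _ := hi1
    exact (mul_lt_mul_iff_of_pos_right hpd).mp key

lemma rademacherFn_const {N n i : ℕ} (hn : n + 1 ≤ N) (hi : i < 2 ^ N) {x : ℝ}
    (hx : x ∈ dyI N i) :
    rademacherFn n x = if (i / 2 ^ (N - n - 1)) % 2 = 0 then 1 else -1 := by
  have hpow : 2 ^ (N - n - 1) * 2 ^ (n+1) = 2 ^ N := by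
    rw [← pow_add]; congr 1; omega
  refine rademacherFn_eq_of_mem_dyI ?_ (dyI_step hn hx)
  rw [Nat.div_lt_iff_lt_mul (show 0 < 2 ^ (N - n - 1) by positivity)]
  calc i < 2 ^ N := hi
  _ = 2 ^ (n+1) * 2 ^ (N - n - 1) := by rw [← hpow]; ring
  _ = _ := by ring

lemma exists_dyI (N : ℕ) {x : ℝ} (hx : x ∈ Set.Ico (0:ℝ) 1) :
    ∃ i, i < 2 ^ N ∧ x ∈ dyI N i := by
  obtain ⟨hx0, hx1⟩ := hx
  have hp : (0:ℝ) < 2 ^ N := by positivity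
  have hy0 : 0 ≤ x * 2 ^ N := by positivity
  have hfl0 : 0 ≤ ⌊x * 2 ^ N⌋ := Int.floor_nonneg.mpr hy0
  refine ⟨(⌊x * 2 ^ N⌋).toNat, ?_, ?_⟩
  · rw [Int.toNat_lt' (show 0 < (2:ℕ) ^ N by positivity), Int.floor_lt]
    push_cast
    nlinarith
  · rw [mem_dyI_iff']
    have hcast : (((⌊x * 2 ^ N⌋).toNat : ℕ) : ℝ) = ((⌊x * 2 ^ N⌋ : ℤ) : ℝ) := by
      exact_mod_cast Int.toNat_of_nonneg hfl0
    rw [hcast]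
    exact ⟨Int.floor_le _, Int.lt_floor_add_one _⟩

/-- sign value of a digit (0 ↦ +1, 1 ↦ -1) -/
def rsgn (v : Fin 2) : ℝ := if v = 0 then 1 else -1

lemma rsgn_add_one : ∀ v : Fin 2, rsgn (v + 1) = - rsgn v
  | 0 => by norm_num [rsgn, show ((0:Fin 2)+1) = 1 from rfl, show ((1:Fin 2)) ≠ 0 from by decide]
  | 1 => by
      have h : ((1:Fin 2) + 1) = 0 := by decide
      rw [h]
      norm_num [rsgn, show ((1:Fin 2)) ≠ 0 from by decide]

/-- count of sign patterns with big value -/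
def cntB {K : ℕ} (a : Fin K → ℝ) (t : ℝ) : ℕ :=
  (Finset.univ.filter fun h : Fin K → Fin 2 => t < |∑ j, a j * rsgn (h j)|).card

lemma digit_finFunctionFinEquiv {N : ℕ} (g : Fin N → Fin 2) (p : Fin N) :
    ((finFunctionFinEquiv g : ℕ) / 2 ^ (p : ℕ)) % 2 = ((g p : ℕ)) := by
  have := finFunctionFinEquiv.symm_apply_apply g
  have h2 := congrFun this p
  rw [← h2]
  rfl

lemma count_comp_aux {N K : ℕ} (pos : Fin K → Fin N) (hinj : Function.Injective pos)
    (P : (Fin K → Fin 2) → Prop) [DecidablePred P] :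
    (Finset.univ.filter fun g : Fin N → Fin 2 => P (fun j => g (pos j))).card
      = 2 ^ (N - K) * (Finset.univ.filter P).card := by
  classical
  have hKN : K ≤ N := by
    have := Fintype.card_le_of_injective pos hinj
    simpa using this
  have e : {g : Fin N → Fin 2 // P (fun j => g (pos j))}
      ≃ {h : Fin K → Fin 2 // P h} × ({u : Fin N // u ∉ Set.range pos} → Fin 2) := by
    refine Equiv.ofBijective
      (fun g => (⟨fun j => g.1 (pos j), g.2⟩, fun u => g.1 u.1)) ⟨?_, ?_⟩
    · intro g g' hgg'
      rw [Prod.ext_iff] at hgg'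
      obtain ⟨h1, h2⟩ := hgg'
      apply Subtype.ext; funext u
      by_cases hu : u ∈ Set.range pos
      · obtain ⟨j, rfl⟩ := hu
        exact congrFun (congrArg Subtype.val h1) j
      · exact congrFun h2 ⟨u, hu⟩
    · rintro ⟨⟨h, hP⟩, w⟩
      have hgdef : ∀ u : Fin N, ∃ v : Fin 2,
          (∀ hu : u ∈ Set.range pos, v = h hu.choose) ∧
          (∀ hu : u ∉ Set.range pos, v = w ⟨u, hu⟩) := by
        intro u
        by_cases hu : u ∈ Set.range pos
        · exact ⟨h hu.choose, fun _ => rfl, fun hu' => absurd hu hu'⟩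
        · exact ⟨w ⟨u, hu⟩, fun hu' => absurd hu' hu, fun _ => rfl⟩
      choose g hg1 hg2 using hgdef
      have hgp : ∀ j, g (pos j) = h j := by
        intro j
        have hu : pos j ∈ Set.range pos := ⟨j, rfl⟩
        have hspec : pos hu.choose = pos j := hu.choose_spec
        rw [hg1 (pos j) hu, hinj hspec]
      have hgfun : (fun j => g (pos j)) = h := funext hgp
      refine ⟨⟨g, by rw [hgfun]; exact hP⟩, ?_⟩
      apply Prod.ext
      · apply Subtype.ext
        exact hgfun
      · funext u
        exact hg2 u.1 u.2
  have hc := Fintype.card_congr e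
  rw [Fintype.card_prod, Fintype.card_fun] at hc
  have hrange : Fintype.card {u : Fin N // u ∈ Set.range pos} = K := by
    calc Fintype.card {u : Fin N // u ∈ Set.range pos}
        = Fintype.card (Set.range pos) := Fintype.card_congr (Equiv.refl _)
    _ = Fintype.card (Fin K) := Set.card_range_of_injective hinj
    _ = K := Fintype.card_fin K
  have hcompl : Fintype.card {u : Fin N // u ∉ Set.range pos} = N - K := by
    rw [Fintype.card_subtype_compl, hrange, Fintype.card_fin]
  rw [hcompl, Fintype.card_subtype, Fintype.card_subtype, Fintype.card_fin] at hc
  rw [hc]; ring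

lemma dyI_measurable (N i : ℕ) : MeasurableSet (dyI N i) := measurableSet_Ico

lemma volume_dyI (N i : ℕ) : volume (dyI N i) = ((2 : ℝ≥0∞) ^ N)⁻¹ := by
  have hp : (0:ℝ) < 2 ^ N := by positivity
  rw [dyI, Real.volume_Ico]
  have : ((i:ℝ) + 1) / 2 ^ N - (i:ℝ) / 2 ^ N = (2 ^ N : ℝ)⁻¹ := by
    field_simp
    ring
  rw [this, ENNReal.ofReal_inv_of_pos hp, ENNReal.ofReal_pow (by norm_num : (0:ℝ) ≤ 2)]
  norm_num

lemma volume_level_set {K : ℕ} (a : Fin K → ℝ) (n : Fin K → ℕ) (hn : Function.Injective n)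
    {t : ℝ} (ht : 0 ≤ t) :
    volume {x : ℝ | t < |∑ j, a j * rademacherFn (n j) x|}
      = (cntB a t : ℝ≥0∞) * ((2 : ℝ≥0∞) ^ K)⁻¹ := by
  classical
  set N := (Finset.univ.sup n) + 1 with hN
  have hnN : ∀ j, n j + 1 ≤ N := fun j =>
    Nat.succ_le_succ (Finset.le_sup (Finset.mem_univ j))
  have posinj : Function.Injective (fun j => (⟨N - n j - 1, by have := hnN j; omega⟩ : Fin N)) := by
    intro j j' hjj'
    apply hn
    have h1 := hnN j; have h2 := hnN j'
    have := congrArg Fin.val hjj'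
    simp only at this
    omega
  set pos : Fin K → Fin N := fun j => ⟨N - n j - 1, by have := hnN j; omega⟩ with hpos
  have hKN : K ≤ N := by
    have := Fintype.card_le_of_injective pos posinj
    simpa using this
  set e := (finFunctionFinEquiv : (Fin N → Fin 2) ≃ Fin (2 ^ N)) with he
  set S := Finset.univ.filter
    (fun g : Fin N → Fin 2 => t < |∑ j, a j * rsgn (g (pos j))|) with hS
  -- pointwise value on an interval
  have hval : ∀ (g : Fin N → Fin 2), ∀ x ∈ dyI N (e g),
      ∀ j, rademacherFn (n j) x = rsgn (g (pos j)) := by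
    intro g x hx j
    have h1 := rademacherFn_const (hnN j) (e g).isLt hx
    have h2 : (((e g) : ℕ) / 2 ^ (N - n j - 1)) % 2 = ((g (pos j) : ℕ)) := by
      have := digit_finFunctionFinEquiv g (pos j)
      exact this
    rw [h1, h2]
    rcases Fin.exists_fin_two.mp ⟨g (pos j), rfl⟩ with _ | _
    all_goals {
      rcases (by omega : (g (pos j) : ℕ) = 0 ∨ (g (pos j) : ℕ) = 1) with h | h
      · simp [h, rsgn, Fin.ext_iff]
      · simp [h, rsgn, Fin.ext_iff]
    }
  have hset : {x : ℝ | t < |∑ j, a j * rademacherFn (n j) x|}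
      = ⋃ g ∈ S, dyI N (e g) := by
    ext x
    simp only [Set.mem_setOf_eq, Set.mem_iUnion]
    constructor
    · intro hx
      have hx01 : x ∈ Set.Ico (0:ℝ) 1 := by
        by_contra hx01
        have : ∀ j, rademacherFn (n j) x = 0 := fun j => rademacherFn_eq_zero hx01
        simp only [this, mul_zero, Finset.sum_const_zero, abs_zero] at hx
        linarith
      obtain ⟨i, hi, hxi⟩ := exists_dyI N hx01
      set g := e.symm ⟨i, hi⟩ with hg
      have hegi : ((e g : ℕ)) = i := by rw [hg, Equiv.apply_symm_apply]
      have hxg : x ∈ dyI N (e g) := by rw [hegi]; exact hxi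
      refine ⟨g, ?_, hxg⟩
      rw [hS, Finset.mem_filter]
      refine ⟨Finset.mem_univ _, ?_⟩
      have : ∀ j, rademacherFn (n j) x = rsgn (g (pos j)) := hval g x hxg
      calc t < |∑ j, a j * rademacherFn (n j) x| := hx
      _ = _ := by simp only [this]
    · rintro ⟨g, hgS, hxg⟩
      rw [hS, Finset.mem_filter] at hgS
      have : ∀ j, rademacherFn (n j) x = rsgn (g (pos j)) := hval g x hxg
      calc t < |∑ j, a j * rsgn (g (pos j))| := hgS.2
      _ = _ := by simp only [this]
  rw [hset]
  rw [measure_biUnion_finset ?_ (fun g _ => dyI_measurable N (e g))]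
  · have : ∀ g ∈ S, volume (dyI N (e g)) = ((2 : ℝ≥0∞) ^ N)⁻¹ :=
      fun g _ => volume_dyI N (e g)
    rw [Finset.sum_congr rfl this, Finset.sum_const, nsmul_eq_mul]
    have hcard : S.card = 2 ^ (N - K) * cntB a t := by
      rw [hS, cntB]
      exact count_comp_aux pos posinj (fun h => t < |∑ j, a j * rsgn (h j)|)
    rw [hcard]
    push_cast
    have h2K : ((2:ℝ≥0∞) ^ K) ≠ 0 := by positivity
    have h2Ktop : ((2:ℝ≥0∞) ^ K) ≠ ⊤ := by
      exact ENNReal.pow_ne_top (by norm_num)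
    have h2NK : ((2:ℝ≥0∞) ^ (N - K)) ≠ 0 := by positivity
    have h2NKtop : ((2:ℝ≥0∞) ^ (N - K)) ≠ ⊤ := ENNReal.pow_ne_top (by norm_num)
    have hNsplit : (2:ℝ≥0∞) ^ N = 2 ^ (N - K) * 2 ^ K := by
      rw [← pow_add]; congr 1; omega
    rw [hNsplit, ENNReal.mul_inv (Or.inl h2NK) (Or.inr h2K)]
    calc (2:ℝ≥0∞) ^ (N-K) * (cntB a t) * ((2 ^ (N-K))⁻¹ * (2 ^ K)⁻¹)
        = ((2:ℝ≥0∞) ^ (N-K) * (2 ^ (N-K))⁻¹) * ((cntB a t) * (2 ^ K)⁻¹) := by ring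
    _ = (cntB a t) * ((2:ℝ≥0∞) ^ K)⁻¹ := by
        rw [ENNReal.mul_inv_cancel h2NK h2NKtop, one_mul]
  · -- pairwise disjoint
    intro g hg g' hg' hgg'
    have : ((e g : ℕ)) ≠ ((e g' : ℕ)) := by
      intro hcon
      exact hgg' (e.injective (Fin.val_injective hcon))
    exact (dyI_disjoint this).mono le_rfl le_rfl

lemma fin2_add_self (v : Fin 2) : v + v = 0 := by fin_cases v <;> decide

lemma cntB_congr {K : ℕ} (a a' : Fin K → ℝ) (hab : ∀ j, |a j| = |a' j|) (t : ℝ) :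
    cntB a t = cntB a' t := by
  classical
  unfold cntB
  set ε : Fin K → Fin 2 := fun j => if a j = a' j then 0 else 1 with hε
  have hkey : ∀ (h : Fin K → Fin 2) j, a j * rsgn (h j + ε j) = a' j * rsgn (h j) := by
    intro h j
    by_cases hj : a j = a' j
    · simp [hε, hj]
    · have : a j = - a' j := by
        rcases abs_eq_abs.mp (hab j) with h1 | h1
        · exact absurd h1 hj
        · exact h1
      simp only [hε, if_neg hj, rsgn_add_one, this]
      ring
  have hkey' : ∀ (h : Fin K → Fin 2) j, a' j * rsgn (h j + ε j) = a j * rsgn (h j) := by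
    intro h j
    by_cases hj : a j = a' j
    · simp [hε, hj]
    · have : a' j = - a j := by
        rcases abs_eq_abs.mp (hab j) with h1 | h1
        · exact absurd h1 hj
        · rw [h1]; ring
      simp only [hε, if_neg hj, rsgn_add_one, this]
      ring
  apply Finset.card_bij' (fun h _ => fun j => h j + ε j) (fun h _ => fun j => h j + ε j)
  · intro h hh
    rw [Finset.mem_filter] at hh ⊢
    refine ⟨Finset.mem_univ _, ?_⟩
    have : ∑ j, a' j * rsgn ((fun j => h j + ε j) j) = ∑ j, a j * rsgn (h j) :=
      Finset.sum_congr rfl (fun j _ => hkey' h j)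
    rw [this]; exact hh.2
  · intro h hh
    rw [Finset.mem_filter] at hh ⊢
    refine ⟨Finset.mem_univ _, ?_⟩
    have : ∑ j, a j * rsgn ((fun j => h j + ε j) j) = ∑ j, a' j * rsgn (h j) :=
      Finset.sum_congr rfl (fun j _ => hkey h j)
    rw [this]; exact hh.2
  · intro h hh
    funext j
    simp only
    rw [add_assoc, fin2_add_self, add_zero]
  · intro h hh
    funext j
    simp only
    rw [add_assoc, fin2_add_self, add_zero]

end Aux14


section Aux14b

lemma dyadicSpan_zero_one : (Set.Ico (0:ℝ) 1).indicator 1 ∈ dyadicSpan := by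
  have h : dyI 0 0 = Set.Ico (0:ℝ) 1 := by
    unfold dyI; norm_num
  rw [← h]; exact indicator_dyI_mem (by norm_num)

lemma N_zero (H : HaarSystemNorm) : H.N 0 = 0 := by
  have h := H.smul_eq 0 0 (Submodule.zero_mem _)
  simpa using h

lemma N_sum_le (H : HaarSystemNorm) {ι : Type*} (s : Finset ι) (f : ι → ℝ → ℝ)
    (hf : ∀ i ∈ s, f i ∈ dyadicSpan) :
    H.N (∑ i ∈ s, f i) ≤ ∑ i ∈ s, H.N (f i) := by
  classical
  induction s using Finset.cons_induction with
  | empty => simp [N_zero]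
  | cons i s his ih =>
    rw [Finset.sum_cons, Finset.sum_cons]
    have h1 := H.add_le (f i) (∑ j ∈ s, f j) (hf i (Finset.mem_cons_self i s))
      (Submodule.sum_mem _ fun j hj => hf j (Finset.mem_cons_of_mem hj))
    exact le_trans h1 (add_le_add_right (ih fun j hj => hf j (Finset.mem_cons_of_mem hj)) _)

lemma abs_rademacherFn (n : ℕ) (x : ℝ) :
    |rademacherFn n x| = |(Set.Ico (0:ℝ) 1).indicator 1 x| := by
  by_cases hx : x ∈ Set.Ico (0:ℝ) 1
  · obtain ⟨m, hm, hxm⟩ := exists_dyI (n+1) hx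
    rw [rademacherFn_eq_of_mem_dyI hm hxm, Set.indicator_of_mem hx]
    split_ifs <;> norm_num
  · rw [rademacherFn_eq_zero hx, Set.indicator_of_notMem hx]

lemma N_rademacher (H : HaarSystemNorm) (n : ℕ) : H.N (rademacherFn n) = 1 := by
  rw [← H.norm_one]
  apply H.distrib_inv _ _ (rademacherFn_mem n) dyadicSpan_zero_one
  intro t
  have h : {x : ℝ | t < |rademacherFn n x|}
      = {x : ℝ | t < |(Set.Ico (0:ℝ) 1).indicator 1 x|} := by
    ext x; rw [Set.mem_setOf_eq, Set.mem_setOf_eq, abs_rademacherFn]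
  rw [h]

lemma fin_sum_rademacher_mem {K : ℕ} (a : Fin K → ℝ) (n : Fin K → ℕ) :
    (fun x => ∑ j, a j * rademacherFn (n j) x) ∈ dyadicSpan := by
  have h : (fun x => ∑ j, a j * rademacherFn (n j) x)
      = ∑ j : Fin K, a j • rademacherFn (n j) := by
    funext x
    rw [Finset.sum_apply]
    exact Finset.sum_congr rfl fun j _ => by simp
  rw [h]
  exact Submodule.sum_mem _ fun j _ => Submodule.smul_mem _ _ (rademacherFn_mem (n j))

lemma N_sum_rademacher_eq (H : HaarSystemNorm) {K : ℕ} (a a' : Fin K → ℝ)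
    (n n' : Fin K → ℕ) (hn : Function.Injective n) (hn' : Function.Injective n')
    (hab : ∀ j, |a j| = |a' j|) :
    H.N (fun x => ∑ j, a j * rademacherFn (n j) x)
      = H.N (fun x => ∑ j, a' j * rademacherFn (n' j) x) := by
  apply H.distrib_inv _ _ (fin_sum_rademacher_mem a n) (fin_sum_rademacher_mem a' n')
  intro t
  show volume {x : ℝ | t < |∑ j, a j * rademacherFn (n j) x|}
      = volume {x : ℝ | t < |∑ j, a' j * rademacherFn (n' j) x|}
  rcases le_or_gt 0 t with ht | ht
  · rw [volume_level_set a n hn ht, volume_level_set a' n' hn' ht, cntB_congr a a' hab t]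
  · have h1 : {x : ℝ | t < |∑ j, a j * rademacherFn (n j) x|} = Set.univ :=
      Set.eq_univ_of_forall fun x => lt_of_lt_of_le ht (abs_nonneg _)
    have h2 : {x : ℝ | t < |∑ j, a' j * rademacherFn (n' j) x|} = Set.univ :=
      Set.eq_univ_of_forall fun x => lt_of_lt_of_le ht (abs_nonneg _)
    rw [h1, h2]

end Aux14b


theorem statement14 (H : HaarSystemNorm)
    (hnot : ¬ ∃ c > (0 : ℝ), ∃ C : ℝ, ∀ (a : ℕ → ℝ) (K : ℕ),
      c * ∑ n ∈ Finset.range K, |a n| ≤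
          H.N (∑ n ∈ Finset.range K, a n • rademacherFn n) ∧
        H.N (∑ n ∈ Finset.range K, a n • rademacherFn n) ≤
          C * ∑ n ∈ Finset.range K, |a n|)
    (φ : (ℝ → ℝ) →ₗ[ℝ] ℝ) (M : ℝ) (hφ : ∀ f ∈ dyadicSpan, |φ f| ≤ M * H.N f) :
    Tendsto (fun n => φ (rademacherFn n)) atTop (nhds 0) := by
  classical
  have hM0 : 0 ≤ M := by
    have h1 := hφ _ dyadicSpan_zero_one
    rw [H.norm_one, mul_one] at h1
    exact le_trans (abs_nonneg _) h1
  rw [Metric.tendsto_atTop]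
  by_contra hT
  push_neg at hT
  obtain ⟨δ, hδ, hfreq⟩ := hT
  have hfreq' : ∀ N : ℕ, ∃ n ≥ N, δ ≤ |φ (rademacherFn n)| := by
    intro N
    obtain ⟨n, hn1, hn2⟩ := hfreq N
    exact ⟨n, hn1, by rwa [Real.dist_eq, sub_zero] at hn2⟩
  have hinf : {n : ℕ | δ ≤ |φ (rademacherFn n)|}.Infinite := by
    rw [← Nat.frequently_atTop_iff_infinite, frequently_atTop]
    exact hfreq'
  have emb := hinf.natEmbedding
  set c := δ / (2 * (M + 1)) with hc
  have hcpos : 0 < c := by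
    apply div_pos hδ; linarith
  push_neg at hnot
  obtain ⟨a, K, hw⟩ := hnot c hcpos 1
  have hup : H.N (∑ n ∈ Finset.range K, a n • rademacherFn n)
      ≤ 1 * ∑ n ∈ Finset.range K, |a n| := by
    rw [one_mul]
    refine le_trans (N_sum_le H _ _ fun i _ => Submodule.smul_mem _ _ (rademacherFn_mem i)) ?_
    apply le_of_eq
    refine Finset.sum_congr rfl fun i _ => ?_
    rw [H.smul_eq _ _ (rademacherFn_mem i), N_rademacher, mul_one]
  have hlow : H.N (∑ n ∈ Finset.range K, a n • rademacherFn n)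
      < c * ∑ n ∈ Finset.range K, |a n| := by
    by_contra hcon
    push_neg at hcon
    exact absurd hup (not_le.mpr (hw hcon))
  set A := ∑ n ∈ Finset.range K, |a n| with hA
  have hNnn := H.nonneg (∑ n ∈ Finset.range K, a n • rademacherFn n)
  have hApos : 0 < A := by
    rcases lt_or_ge 0 A with h | h
    · exact h
    · exfalso
      have hA0 : A = 0 :=
        le_antisymm h (Finset.sum_nonneg fun i _ => abs_nonneg _)
      rw [hA0, mul_zero] at hlow
      linarith
  set m : Fin K → ℕ := fun j => ((emb (j : ℕ) : ℕ)) with hm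
  have hminj : Function.Injective m := by
    intro j j' h
    exact Fin.val_injective (emb.injective (Subtype.ext h))
  have hmT : ∀ j : Fin K, δ ≤ |φ (rademacherFn (m j))| := fun j => (emb (j : ℕ)).2
  set b : Fin K → ℝ :=
    fun j => |a (j : ℕ)| * (if φ (rademacherFn (m j)) < 0 then -1 else 1) with hb
  have hba : ∀ j : Fin K, |b j| = |a (j : ℕ)| := by
    intro j
    rw [hb]
    dsimp only
    split_ifs with h
    · rw [abs_mul, abs_neg, abs_one, mul_one, abs_abs]
    · rw [mul_one, abs_abs]
  set g : ℝ → ℝ := fun x => ∑ j, b j * rademacherFn (m j) x with hg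
  have hgsum : g = ∑ j : Fin K, b j • rademacherFn (m j) := by
    funext x
    rw [hg, Finset.sum_apply]
    exact Finset.sum_congr rfl fun j _ => by simp
  have hgmem : g ∈ dyadicSpan := by
    rw [hgsum]
    exact Submodule.sum_mem _ fun j _ => Submodule.smul_mem _ _ (rademacherFn_mem _)
  have hφg : φ g = ∑ j : Fin K, b j * φ (rademacherFn (m j)) := by
    rw [hgsum, map_sum]
    exact Finset.sum_congr rfl fun j _ => by rw [LinearMap.map_smul, smul_eq_mul]
  have hterm : ∀ j : Fin K,
      b j * φ (rademacherFn (m j)) = |a (j:ℕ)| * |φ (rademacherFn (m j))| := by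
    intro j
    rw [hb]
    dsimp only
    rcases lt_or_ge (φ (rademacherFn (m j))) 0 with h | h
    · rw [if_pos h, abs_of_neg h]; ring
    · rw [if_neg (not_lt.mpr h), abs_of_nonneg h]; ring
  have hlower : δ * A ≤ φ g := by
    rw [hφg]
    have h1 : ∀ j : Fin K, δ * |a (j:ℕ)| ≤ b j * φ (rademacherFn (m j)) := by
      intro j
      rw [hterm j]
      calc δ * |a (j:ℕ)| = |a (j:ℕ)| * δ := mul_comm _ _
      _ ≤ |a (j:ℕ)| * |φ (rademacherFn (m j))| :=
          mul_le_mul_of_nonneg_left (hmT j) (abs_nonneg _)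
    calc δ * A = ∑ n ∈ Finset.range K, δ * |a n| := by rw [hA, Finset.mul_sum]
    _ = ∑ j : Fin K, δ * |a (j:ℕ)| :=
        (Fin.sum_univ_eq_sum_range (fun n => δ * |a n|) K).symm
    _ ≤ ∑ j : Fin K, b j * φ (rademacherFn (m j)) := Finset.sum_le_sum fun j _ => h1 j
  have hNg : H.N g = H.N (∑ n ∈ Finset.range K, a n • rademacherFn n) := by
    have hfun : (∑ n ∈ Finset.range K, a n • rademacherFn n)
        = fun x => ∑ j : Fin K, a (j : ℕ) * rademacherFn ((j : ℕ)) x := by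
      funext x
      rw [Finset.sum_apply,
        ← Fin.sum_univ_eq_sum_range (fun n => (a n • rademacherFn n) x) K]
      exact Finset.sum_congr rfl fun j _ => by simp
    rw [hfun, hg]
    exact N_sum_rademacher_eq H b (fun j => a (j:ℕ)) m (fun j => (j:ℕ)) hminj
      Fin.val_injective hba
  have hupper : φ g ≤ (M + 1) * (c * A) := by
    calc φ g ≤ |φ g| := le_abs_self _
    _ ≤ M * H.N g := hφ g hgmem
    _ ≤ (M + 1) * H.N g := by nlinarith [H.nonneg g]
    _ ≤ (M + 1) * (c * A) := by
        apply mul_le_mul_of_nonneg_left _ (by linarith : (0:ℝ) ≤ M + 1)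
        rw [hNg]
        exact le_of_lt hlow
  rw [hc] at hupper
  have heq : (M + 1) * (δ / (2 * (M + 1)) * A) = δ * A / 2 := by
    have hM1 : M + 1 ≠ 0 := by linarith
    field_simp
  rw [heq] at hupper
  nlinarith

end
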